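/- Let c be a composition with c ≠ x y x for all decompositions, and θ the run-replacement map sending maximal runs of k copies of c to run parts k̄ of size k|c|. Then θ is a bijection from compositions of n onto sequences over the alphabet ℕ ∪ {k̄ : k ≥ 1} of total size n that contain no two consecutive run parts and no occurrence of c. -/

import Mathlib

/-- The size of a part in the extended alphabet `ℕ ⊕ ℕ`: `Sum.inl p` is an
ordinary part of size `p`, and `Sum.inr k` is the run part `k̄` of size
`k * |c|`. -/
def runPartSize (c : List ℕ) : ℕ ⊕ ℕ → ℕ
  | Sum.inl p => p
  | Sum.inr k => k * c.sum

/-- The run-replacement map `θ`: each maximal run of `k` consecutive copies of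
`c` in `a` is replaced by the single run part `k̄ = Sum.inr k`; all other parts
`p` become ordinary parts `Sum.inl p`. -/
def theta (c : List ℕ) (a : List ℕ) : List (ℕ ⊕ ℕ) :=
  if hc : c = [] then a.map Sum.inl
  else
    match a with
    | [] => []
    | p :: rest =>
      if c <+: (p :: rest) then
        match theta c ((p :: rest).drop c.length) with
        | Sum.inr k :: t => Sum.inr (k + 1) :: t
        | t => Sum.inr 1 :: t
      else Sum.inl p :: theta c rest
termination_by a.length
decreasing_by
  · simp only [List.length_drop, List.length_cons]
    have : 0 < c.length := by
      cases c with
      | nil => exact absurd rfl hc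
      | cons _ _ => simp
    omega
  · simp

namespace RT

variable {c : List ℕ}

/-- inverse of theta -/
def unTheta (c : List ℕ) : List (ℕ ⊕ ℕ) → List ℕ
  | [] => []
  | Sum.inl p :: t => p :: unTheta c t
  | Sum.inr k :: t => (List.replicate k c).flatten ++ unTheta c t

lemma theta_nil : theta c [] = [] := by
  rw [theta]; split <;> simp

lemma theta_neg (hc : c ≠ []) {p : ℕ} {rest : List ℕ} (h : ¬ c <+: (p :: rest)) :
    theta c (p :: rest) = Sum.inl p :: theta c rest := by
  rw [theta]; simp [hc, h]

lemma theta_pos (hc : c ≠ []) {a : List ℕ} (h : c <+: a) :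
    theta c a = match theta c (a.drop c.length) with
        | Sum.inr k :: t => Sum.inr (k + 1) :: t
        | t => Sum.inr 1 :: t := by
  cases a with
  | nil => exact absurd (List.prefix_nil.mp h) hc
  | cons p rest => rw [theta]; simp [hc, h]

lemma theta_eq_inl (hc : c ≠ []) {l : List ℕ} {p : ℕ} {m : List (ℕ ⊕ ℕ)}
    (h : theta c l = Sum.inl p :: m) :
    ∃ r, l = p :: r ∧ ¬ c <+: l ∧ m = theta c r := by
  cases l with
  | nil => rw [theta_nil] at h; exact absurd h (by simp)
  | cons q rest =>
    by_cases hpre : c <+: q :: rest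
    · rw [theta_pos hc hpre] at h
      rcases ht : theta c ((q :: rest).drop c.length) with _ | ⟨x | k, t⟩ <;>
        rw [ht] at h <;> simp at h
    · rw [theta_neg hc hpre] at h
      obtain ⟨h1, h2⟩ := List.cons.injEq _ _ _ _ ▸ h
      exact ⟨rest, by simp_all, hpre, h2.symm⟩

lemma theta_eq_inr (hc : c ≠ []) {l : List ℕ} {k : ℕ} {m : List (ℕ ⊕ ℕ)}
    (h : theta c l = Sum.inr k :: m) : c <+: l := by
  cases l with
  | nil => rw [theta_nil] at h; exact absurd h (by simp)
  | cons q rest =>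
    by_cases hpre : c <+: q :: rest
    · exact hpre
    · rw [theta_neg hc hpre] at h; simp at h

/-- left inverse -/
lemma un_theta (hc : c ≠ []) : ∀ a : List ℕ, unTheta c (theta c a) = a := by
  suffices H : ∀ n (a : List ℕ), a.length ≤ n → unTheta c (theta c a) = a from
    fun a => H a.length a le_rfl
  intro n
  induction n with
  | zero => intro a ha; rw [List.length_eq_zero_iff.mp (Nat.le_zero.mp ha), theta_nil]; rfl
  | succ n ih =>
    intro a ha
    cases a with
    | nil => rw [theta_nil]; rfl
    | cons p rest =>
      by_cases hpre : c <+: p :: rest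
      · obtain ⟨s, hs⟩ := hpre
        have hcl : 1 ≤ c.length := List.length_pos_iff.mpr hc
        have hd : (p :: rest).drop c.length = s := by rw [← hs, List.drop_left]
        have hslen : s.length ≤ n := by
          simp only [List.length_cons] at ha
          have h2 := congrArg List.length hs
          simp only [List.length_append, List.length_cons] at h2
          omega
        have ihs := ih s hslen
        rw [theta_pos hc ⟨s, hs⟩, hd]
        rcases ht : theta c s with _ | ⟨x | k, t⟩ <;> rw [ht] at ihs
        · show unTheta c [Sum.inr 1] = p :: rest
          simp only [unTheta, List.replicate_one, List.flatten_cons, List.flatten_nil,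
            List.append_nil]
          have h0 : s = [] := by rw [← ihs]; rfl
          subst h0
          simpa using hs
        · show unTheta c (Sum.inr 1 :: Sum.inl x :: t) = p :: rest
          simp only [unTheta, List.replicate_one, List.flatten_cons, List.flatten_nil,
            List.append_nil]
          rw [show (x :: unTheta c t) = unTheta c (Sum.inl x :: t) from rfl, ihs]
          exact hs
        · show unTheta c (Sum.inr (k + 1) :: t) = p :: rest
          have : unTheta c (Sum.inr (k + 1) :: t) = c ++ unTheta c (Sum.inr k :: t) := by
            simp [unTheta, List.replicate_succ]
          rw [this, ihs]
          exact hs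
      · have hrl : rest.length ≤ n := by simp at ha; omega
        rw [theta_neg hc hpre]
        simp only [unTheta]
        rw [ih rest hrl]


lemma readback (hc : c ≠ []) : ∀ (u : List ℕ) (l : List ℕ),
    u.map Sum.inl <+: theta c l → u <+: l := by
  intro u
  induction u with
  | nil => intro l _; exact List.nil_prefix
  | cons q u' ih =>
    intro l h
    obtain ⟨r, hr⟩ := h
    obtain ⟨l', hl', _, hm⟩ := theta_eq_inl hc (l := l) (p := q)
      (m := u'.map Sum.inl ++ r) (by rw [← hr]; simp)
    subst hl'
    have : u' <+: l' := ih l' (by rw [← hm]; exact ⟨r, rfl⟩)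
    exact List.cons_prefix_cons.mpr ⟨rfl, this⟩

/-- combined structural facts about the image of theta -/
lemma theta_props (hc : c ≠ []) : ∀ a : List ℕ,
    (∀ p, Sum.inl p ∈ theta c a → p ∈ a) ∧
    (∀ k, Sum.inr k ∈ theta c a → 1 ≤ k) ∧
    (theta c a).Chain' (fun p q => p.isLeft = true ∨ q.isLeft = true) ∧
    ¬ (c.map Sum.inl) <:+: theta c a := by
  suffices H : ∀ n (a : List ℕ), a.length ≤ n →
      (∀ p, Sum.inl p ∈ theta c a → p ∈ a) ∧
      (∀ k, Sum.inr k ∈ theta c a → 1 ≤ k) ∧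
      (theta c a).Chain' (fun p q => p.isLeft = true ∨ q.isLeft = true) ∧
      ¬ (c.map Sum.inl) <:+: theta c a from fun a => H a.length a le_rfl
  intro n
  induction n with
  | zero =>
    intro a ha
    rw [List.length_eq_zero_iff.mp (Nat.le_zero.mp ha), theta_nil]
    refine ⟨by simp, by simp, List.isChain_nil, ?_⟩
    rw [List.infix_nil]
    simp [hc]
  | succ n ih =>
    intro a ha
    cases a with
    | nil =>
      rw [theta_nil]
      refine ⟨by simp, by simp, List.isChain_nil, ?_⟩
      rw [List.infix_nil]
      simp [hc]
    | cons p rest =>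
      by_cases hpre : c <+: p :: rest
      · obtain ⟨s, hs⟩ := hpre
        have hcl : 1 ≤ c.length := List.length_pos_iff.mpr hc
        have hd : (p :: rest).drop c.length = s := by rw [← hs, List.drop_left]
        have hslen : s.length ≤ n := by
          simp only [List.length_cons] at ha
          have h2 := congrArg List.length hs
          simp only [List.length_append, List.length_cons] at h2
          omega
        obtain ⟨ih1, ih2, ih3, ih4⟩ := ih s hslen
        have hmems : ∀ p', p' ∈ s → p' ∈ p :: rest := by
          intro p' hp'; rw [← hs]; exact List.mem_append_right c hp'
        rw [theta_pos hc ⟨s, hs⟩, hd]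
        -- helper: facts about the resulting list `Sum.inr K :: t` where t is (a suffix of) theta c s
        have key : ∀ (K : ℕ) (t : List (ℕ ⊕ ℕ)), 1 ≤ K →
            (theta c s = t ∨ ∃ k', theta c s = Sum.inr k' :: t) →
            (t.Chain' (fun p q => p.isLeft = true ∨ q.isLeft = true)) →
            (∀ y ∈ t.head?, y.isLeft = true) →
            (∀ p', Sum.inl p' ∈ Sum.inr K :: t → p' ∈ p :: rest) ∧
            (∀ k, Sum.inr k ∈ Sum.inr K :: t → 1 ≤ k) ∧
            (Sum.inr K :: t).Chain' (fun p q => p.isLeft = true ∨ q.isLeft = true) ∧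
            ¬ (c.map Sum.inl) <:+: Sum.inr K :: t := by
          intro K t hK hts hch hhd
          have hsub : ∀ x, x ∈ t → x ∈ theta c s := by
            intro x hx
            rcases hts with h | ⟨k', h⟩ <;> rw [h]
            · exact hx
            · exact List.mem_cons_of_mem _ hx
          refine ⟨?_, ?_, ?_, ?_⟩
          · intro p' hp'
            rcases List.mem_cons.mp hp' with h | h
            · simp at h
            · exact hmems p' (ih1 p' (hsub _ h))
          · intro k hk
            rcases List.mem_cons.mp hk with h | h
            · rw [Sum.inr.injEq] at h; omega
            · exact ih2 k (hsub _ h)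
          · exact List.isChain_cons.mpr ⟨fun y hy => Or.inr (hhd y hy), hch⟩
          · intro hinf
            rcases List.infix_cons_iff.mp hinf with h | h
            · -- prefix: head of c.map inl is inl, mismatch
              obtain ⟨hd', tl', hc'⟩ : ∃ hd' tl', c = hd' :: tl' := by
                cases c with
                | nil => exact absurd rfl hc
                | cons x y => exact ⟨x, y, rfl⟩
              rw [hc'] at h
              obtain ⟨r, hr⟩ := h
              simp at hr
            · -- infix of t hence of theta c s
              rcases hts with h' | ⟨k', h'⟩
              · exact ih4 (h' ▸ h)
              · exact ih4 (h.trans (List.IsSuffix.isInfix (h' ▸ List.suffix_cons _ _)))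
        rcases ht : theta c s with _ | ⟨x | k, t⟩ <;> rw [ht] at ih1 ih2 ih3 ih4
        · exact key 1 [] le_rfl (Or.inl ht) List.isChain_nil (by simp)
        · exact key 1 (Sum.inl x :: t) le_rfl (Or.inl ht) ih3 (by simp)
        · refine key (k + 1) t (by omega) (Or.inr ⟨k, ht⟩) (List.isChain_cons.mp ih3).2 ?_
          intro y hy
          rcases (List.isChain_cons.mp ih3).1 y hy with h | h
          · simp at h
          · exact h
      · have hrl : rest.length ≤ n := by simp at ha; omega
        obtain ⟨ih1, ih2, ih3, ih4⟩ := ih rest hrl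
        rw [theta_neg hc hpre]
        refine ⟨?_, ?_, ?_, ?_⟩
        · intro p' hp'
          rcases List.mem_cons.mp hp' with h | h
          · rw [Sum.inl.injEq] at h; exact h ▸ List.mem_cons_self
          · exact List.mem_cons_of_mem _ (ih1 p' h)
        · intro k hk
          rcases List.mem_cons.mp hk with h | h
          · simp at h
          · exact ih2 k h
        · exact List.isChain_cons.mpr ⟨fun y _ => Or.inl rfl, ih3⟩
        · intro hinf
          rcases List.infix_cons_iff.mp hinf with h | h
          · exact hpre (readback hc c (p :: rest) (by rw [theta_neg hc hpre]; exact h))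
          · exact ih4 h


lemma sum_unTheta : ∀ b : List (ℕ ⊕ ℕ), (unTheta c b).sum = (b.map (runPartSize c)).sum := by
  intro b
  induction b with
  | nil => rfl
  | cons q t ihb =>
    cases q with
    | inl p => simp [unTheta, runPartSize, ihb]
    | inr k =>
      simp only [unTheta, List.map_cons, List.sum_cons, List.sum_append, ihb, runPartSize]
      congr 1
      rw [List.sum_flatten, List.map_replicate, List.sum_replicate, smul_eq_mul]

lemma mem_unTheta : ∀ (b : List (ℕ ⊕ ℕ)) (p : ℕ), p ∈ unTheta c b → Sum.inl p ∈ b ∨ p ∈ c := by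
  intro b
  induction b with
  | nil => intro p hp; exact absurd hp (by simp [unTheta])
  | cons q t ihb =>
    cases q with
    | inl x =>
      intro p hp
      rcases List.mem_cons.mp hp with h | h
      · exact Or.inl (h ▸ List.mem_cons_self)
      · rcases ihb p h with h' | h'
        · exact Or.inl (List.mem_cons_of_mem _ h')
        · exact Or.inr h'
    | inr k =>
      intro p hp
      rcases List.mem_append.mp hp with h | h
      · obtain ⟨l, hl, hpl⟩ := List.mem_flatten.mp h
        exact Or.inr (List.eq_of_mem_replicate hl ▸ hpl)
      · rcases ihb p h with h' | h'
        · exact Or.inl (List.mem_cons_of_mem _ h')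
        · exact Or.inr h'

/-- c has no nonempty proper border -/
lemma borderfree (hc : c ≠ []) (hxyx : ¬ ∃ x y : List ℕ, x ≠ [] ∧ c = x ++ y ++ x) :
    ∀ v : List ℕ, v <+: c → v <:+ c → v ≠ [] → v = c := by
  suffices H : ∀ n (v : List ℕ), v.length ≤ n → v <+: c → v <:+ c → v ≠ [] → v = c from
    fun v => H v.length v le_rfl
  intro n
  induction n with
  | zero =>
    intro v hlen _ _ hne
    exact absurd (List.length_eq_zero_iff.mp (Nat.le_zero.mp hlen)) hne
  | succ n ihn =>
    intro v hlen hpre hsuf hne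
    by_cases hvc : v.length = c.length
    · exact hpre.eq_of_length hvc
    · exfalso
      have hlt : v.length < c.length := lt_of_le_of_ne hpre.length_le hvc
      obtain ⟨u, hu⟩ := hsuf
      have hul : u.length + v.length = c.length := by
        have := congrArg List.length hu; simpa using this
      have hvtake : v = (u ++ v).take v.length := by
        rw [hu]; exact List.prefix_iff_eq_take.mp hpre
      by_cases hcase : v.length ≤ u.length
      · -- v is a prefix of u, so c = v ++ y ++ v
        have h3 : v = u.take v.length :=
          hvtake.trans (List.take_append_of_le_length hcase)
        obtain ⟨y, hy⟩ : v <+: u := by rw [h3]; exact List.take_prefix _ _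
        exact hxyx ⟨v, y, hne, by rw [← hu, ← hy, List.append_assoc]⟩
      · -- shorter border v.take (v.length - u.length)
        push_neg at hcase
        set v' := v.take (v.length - u.length) with hv'def
        have hveq : v = u ++ v' := by
          rw [hvtake, List.take_append,
            List.take_of_length_le (le_of_lt hcase)]
        have hune : u ≠ [] := by
          intro h; rw [h] at hul; simp at hul; omega
        have hulpos : 0 < u.length := List.length_pos_iff.mpr hune
        have hv'len : v'.length = v.length - u.length := by
          rw [hv'def, List.length_take]; omega
        have hv'ne : v' ≠ [] := by
          intro h
          rw [h] at hv'len; simp at hv'len; omega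
        have hv'pre : v' <+: c := (List.take_prefix _ _).trans hpre
        have hsufv : v' <:+ v := ⟨u, hveq.symm⟩
        have hv'suf : v' <:+ c := hsufv.trans ⟨u, hu⟩
        have := ihn v' (by omega) hv'pre hv'suf hv'ne
        have : v'.length = c.length := congrArg List.length this
        omega

/-- a proper suffix of c that is a prefix of `unTheta t` lies entirely in leading inl parts -/
lemma straddle (hc : c ≠ []) (hbf : ∀ v : List ℕ, v <+: c → v <:+ c → v ≠ [] → v = c) :
    ∀ t : List (ℕ ⊕ ℕ), theta c (unTheta c t) = t → ∀ u v : List ℕ,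
      c = u ++ v → u ≠ [] → v <+: unTheta c t → v.map Sum.inl <+: t := by
  intro t
  induction t with
  | nil =>
    intro _ u v _ _ hv
    have : v = [] := List.prefix_nil.mp hv
    simp [this]
  | cons q t' ih =>
    cases q with
    | inl p =>
      intro hth u v hcu hu hv
      cases v with
      | nil => exact List.nil_prefix
      | cons x v' =>
        simp only [unTheta] at hv hth
        obtain ⟨hxp, hv'⟩ := List.cons_prefix_cons.mp hv
        subst hxp
        obtain ⟨r, hr, _, hm⟩ := theta_eq_inl hc hth
        have hrr : r = unTheta c t' := (List.cons.injEq _ _ _ _ ▸ hr).2.symm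
        have hth' : theta c (unTheta c t') = t' := by rw [← hrr, ← hm]
        have := ih hth' (u ++ [x]) v' (by rw [hcu]; simp) (by simp) hv'
        exact List.cons_prefix_cons.mpr ⟨rfl, this⟩
    | inr k =>
      intro hth u v hcu hu hv
      have hk : 1 ≤ k := by
        have := (theta_props hc (unTheta c (Sum.inr k :: t'))).2.1 k
        rw [hth] at this
        exact this (List.mem_cons_self)
      have hvlt : v.length < c.length := by
        have := congrArg List.length hcu
        simp at this
        have : u.length ≠ 0 := fun h => hu (List.length_eq_zero_iff.mp h)
        omega
      obtain ⟨k', rfl⟩ : ∃ k', k = k' + 1 := ⟨k - 1, by omega⟩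
      have hexp : unTheta c (Sum.inr (k' + 1) :: t') =
          c ++ ((List.replicate k' c).flatten ++ unTheta c t') := by
        simp [unTheta, List.replicate_succ]
      rw [hexp] at hv
      have hvpre : v <+: c := by
        rw [List.prefix_iff_eq_take] at hv
        have h3 : v = c.take v.length :=
          hv.trans (List.take_append_of_le_length (le_of_lt hvlt))
        rw [h3]
        exact List.take_prefix _ _
      have : v = [] := by
        by_contra hne
        have := hbf v hvpre ⟨u, hcu.symm⟩ hne
        rw [this] at hvlt
        omega
      simp [this]


lemma theta_run (hc : c ≠ []) : ∀ (k : ℕ) (s : List ℕ), ¬ c <+: s →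
    theta c ((List.replicate (k + 1) c).flatten ++ s) = Sum.inr (k + 1) :: theta c s := by
  intro k
  induction k with
  | zero =>
    intro s hs
    have h1 : (List.replicate 1 c).flatten ++ s = c ++ s := by simp
    have hpre : c <+: c ++ s := List.prefix_append c s
    rw [h1, theta_pos hc hpre, List.drop_left]
    cases s with
    | nil => rw [theta_nil]
    | cons p r =>
      rw [theta_neg hc hs]
  | succ k ihk =>
    intro s hs
    have h1 : (List.replicate (k + 2) c).flatten ++ s =
        c ++ ((List.replicate (k + 1) c).flatten ++ s) := by
      simp [List.replicate_succ]
    have hpre : c <+: c ++ ((List.replicate (k + 1) c).flatten ++ s) := List.prefix_append _ _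
    rw [h1, theta_pos hc hpre, List.drop_left, ihk s hs]

/-- right inverse on the good set -/
lemma theta_un (hc : c ≠ []) (hbf : ∀ v : List ℕ, v <+: c → v <:+ c → v ≠ [] → v = c) :
    ∀ b : List (ℕ ⊕ ℕ),
      (∀ k, Sum.inr k ∈ b → 1 ≤ k) →
      b.Chain' (fun p q => p.isLeft = true ∨ q.isLeft = true) →
      ¬ (c.map Sum.inl) <:+: b →
      theta c (unTheta c b) = b := by
  intro b
  induction b with
  | nil => intro _ _ _; exact theta_nil
  | cons q t ih =>
    intro hk hch hni
    have hkt : ∀ k, Sum.inr k ∈ t → 1 ≤ k := fun k hkk => hk k (List.mem_cons_of_mem _ hkk)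
    have hcht := (List.isChain_cons.mp hch).2
    have hnit : ¬ (c.map Sum.inl) <:+: t := fun h =>
      hni (h.trans (List.IsSuffix.isInfix (List.suffix_cons _ _)))
    have iht := ih hkt hcht hnit
    cases q with
    | inl p =>
      show theta c (p :: unTheta c t) = Sum.inl p :: t
      have hnp : ¬ c <+: p :: unTheta c t := by
        intro hpre
        obtain ⟨hd', tl', hc'⟩ : ∃ hd' tl', c = hd' :: tl' := by
          cases c with
          | nil => exact absurd rfl hc
          | cons x y => exact ⟨x, y, rfl⟩
        have hpre2 : hd' :: tl' <+: p :: unTheta c t := by rw [← hc']; exact hpre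
        obtain ⟨hdp, htl⟩ := List.cons_prefix_cons.mp hpre2
        subst hdp
        have hstr := straddle hc hbf t iht [hd'] tl' (by rw [hc']; rfl) (by simp) htl
        apply hni
        apply List.IsPrefix.isInfix
        rw [hc', List.map_cons]
        exact List.cons_prefix_cons.mpr ⟨rfl, hstr⟩
      rw [theta_neg hc hnp, iht]
    | inr k =>
      have hk1 : 1 ≤ k := hk k (List.mem_cons_self)
      obtain ⟨k', rfl⟩ : ∃ k', k = k' + 1 := ⟨k - 1, by omega⟩
      show theta c ((List.replicate (k' + 1) c).flatten ++ unTheta c t) = Sum.inr (k' + 1) :: t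
      have hns : ¬ c <+: unTheta c t := by
        intro hpre
        cases t with
        | nil =>
          exact hc (List.prefix_nil.mp hpre)
        | cons q' t' =>
          cases q' with
          | inl x =>
            rw [theta_pos hc hpre] at iht
            rcases ht : theta c ((unTheta c (Sum.inl x :: t')).drop c.length) with _ | ⟨y | m, r⟩ <;>
              rw [ht] at iht <;> simp at iht
          | inr m =>
            have := (List.isChain_cons.mp hch).1 (Sum.inr m) rfl
            simp at this
      rw [theta_run hc k' (unTheta c t) hns, iht]

end RT

/-- `θ` is a bijection from compositions of `n` onto sequences over the
alphabet `ℕ ∪ {k̄ : k ≥ 1}` of total size `n` containing no two consecutive run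
parts and no occurrence of `c` (as a consecutive block of ordinary parts). -/
theorem theta_bijection (c : List ℕ) (hc : c ≠ []) (hpos : ∀ p ∈ c, 0 < p)
    (hxyx : ¬ ∃ x y : List ℕ, x ≠ [] ∧ c = x ++ y ++ x) (n : ℕ) :
    Set.BijOn (theta c)
      {a : List ℕ | (∀ p ∈ a, 0 < p) ∧ a.sum = n}
      {b : List (ℕ ⊕ ℕ) |
        (∀ q ∈ b, 0 < runPartSize c q) ∧
        ((b.map (runPartSize c)).sum = n) ∧
        b.Chain' (fun p q => p.isLeft = true ∨ q.isLeft = true) ∧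
        ¬ (c.map Sum.inl) <:+: b} := by
  have hbf := RT.borderfree hc hxyx
  have hcsum : 0 < c.sum := by
    cases c with
    | nil => exact absurd rfl hc
    | cons x y =>
      have : 0 < x := hpos x (List.mem_cons_self)
      simp only [List.sum_cons]
      omega
  refine ⟨?_, ?_, ?_⟩
  · -- MapsTo
    rintro a ⟨hapos, hasum⟩
    obtain ⟨h1, h2, h3, h4⟩ := RT.theta_props hc a
    refine ⟨?_, ?_, h3, h4⟩
    · rintro (p | k) hq
      · exact hapos p (h1 p hq)
      · have := h2 k hq
        show 0 < k * c.sum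
        exact Nat.mul_pos (by omega) hcsum
    · rw [← RT.sum_unTheta (theta c a), RT.un_theta hc a, hasum]
  · -- InjOn
    intro a₁ _ a₂ _ h
    rw [← RT.un_theta hc a₁, h, RT.un_theta hc a₂]
  · -- SurjOn
    rintro b ⟨hbpos, hbsum, hbch, hbni⟩
    have hk : ∀ k, Sum.inr k ∈ b → 1 ≤ k := by
      intro k hkb
      have h2 : 0 < k * c.sum := hbpos _ hkb
      rcases Nat.eq_zero_or_pos k with h0 | h0
      · rw [h0] at h2; simp at h2
      · exact h0
    have hth := RT.theta_un hc hbf b hk hbch hbni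
    refine ⟨RT.unTheta c b, ⟨?_, ?_⟩, hth⟩
    · intro p hp
      rcases RT.mem_unTheta b p hp with h | h
      · have := hbpos _ h
        exact this
      · exact hpos p h
    · rw [RT.sum_unTheta b, hbsum]
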